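/- For every real α > 1/2, every ρ > 0 and every a ∈ ℝ⁴: ∫_{ℝ⁴} (16 ρ² / (‖x−a‖² + ρ²)²)^α · (4 ρ² / (‖x−a‖² + ρ²)²) dx = 4^{2α+1} π² (2α−1) · Γ(2α−1)/Γ(2α+2) · ρ^{2−2α}. (This computes the aᵘ–aᵛ diagonal components of the universal metric g^{0,α} on the c₂ = 1 SU(2) instanton moduli space built from the ADHM universal matrix; the coefficient is A(α) = 4^{2α+1} π² (2α−1) Γ(2α−1)/Γ(2(α+1)).) -/

import Mathlib

open MeasureTheory Real

open Set Filter Topology in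
private lemma adhm_radial_int (ρ : ℝ) (hρ : 0 < ρ) {s : ℝ} (hs : 3 < s) :
    ∫ y in Ioi (0:ℝ), y ^ 3 * (y ^ 2 + ρ ^ 2) ^ (-s) =
      (ρ ^ 2) ^ (2 - s) / (2 * (s - 1) * (s - 2)) := by
  have hρ2 : (0:ℝ) < ρ ^ 2 := by positivity
  set F : ℝ → ℝ := fun y =>
    ((y ^ 2 + ρ ^ 2) ^ (2 - s) / (2 - s) - ρ ^ 2 * (y ^ 2 + ρ ^ 2) ^ (1 - s) / (1 - s)) / 2
    with hF
  have hs1 : (1:ℝ) - s ≠ 0 := by intro h; nlinarith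
  have hs2 : (2:ℝ) - s ≠ 0 := by intro h; nlinarith
  have hderiv : ∀ y : ℝ, HasDerivAt F (y ^ 3 * (y ^ 2 + ρ ^ 2) ^ (-s)) y := by
    intro y
    have hu : (0:ℝ) < y ^ 2 + ρ ^ 2 := by positivity
    have h1 : HasDerivAt (fun y : ℝ => y ^ 2 + ρ ^ 2) (2 * y) y := by
      simpa using ((hasDerivAt_pow 2 y).add_const (ρ ^ 2))
    have h2 : HasDerivAt (fun y : ℝ => (y ^ 2 + ρ ^ 2) ^ (2 - s))
        (2 * y * (2 - s) * (y ^ 2 + ρ ^ 2) ^ (2 - s - 1)) y :=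
      h1.rpow_const (Or.inl hu.ne')
    have h3 : HasDerivAt (fun y : ℝ => (y ^ 2 + ρ ^ 2) ^ (1 - s))
        (2 * y * (1 - s) * (y ^ 2 + ρ ^ 2) ^ (1 - s - 1)) y :=
      h1.rpow_const (Or.inl hu.ne')
    have := (((h2.div_const (2 - s)).sub ((h3.const_mul (ρ ^ 2)).div_const (1 - s))).div_const 2)
    refine this.congr_deriv ?_
    have e1 : (y ^ 2 + ρ ^ 2) ^ (2 - s - 1) = (y ^ 2 + ρ ^ 2) * (y ^ 2 + ρ ^ 2) ^ (-s) := by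
      rw [show (2 - s - 1 : ℝ) = 1 + -s by ring, rpow_add hu, rpow_one]
    have e2 : (y ^ 2 + ρ ^ 2) ^ (1 - s - 1) = (y ^ 2 + ρ ^ 2) ^ (-s) := by
      norm_num
    rw [e1, e2]
    field_simp
    ring
  have hnonneg : ∀ y ∈ Ioi (0:ℝ), 0 ≤ y ^ 3 * (y ^ 2 + ρ ^ 2) ^ (-s) := by
    intro y hy
    have : (0:ℝ) < y := hy
    positivity
  have htend : Tendsto F atTop (𝓝 0) := by
    have hu : Tendsto (fun y : ℝ => y ^ 2 + ρ ^ 2) atTop atTop :=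
      tendsto_atTop_add_const_right atTop (ρ ^ 2) (tendsto_pow_atTop two_ne_zero)
    have t1 : Tendsto (fun y : ℝ => (y ^ 2 + ρ ^ 2) ^ (2 - s)) atTop (𝓝 0) := by
      have h := (tendsto_rpow_neg_atTop (by linarith : (0:ℝ) < s - 2)).comp hu
      refine h.congr fun y => ?_
      rw [Function.comp_apply, neg_sub]
    have t2 : Tendsto (fun y : ℝ => (y ^ 2 + ρ ^ 2) ^ (1 - s)) atTop (𝓝 0) := by
      have h := (tendsto_rpow_neg_atTop (by linarith : (0:ℝ) < s - 1)).comp hu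
      refine h.congr fun y => ?_
      rw [Function.comp_apply, neg_sub]
    have := (((t1.div_const (2 - s)).sub ((t2.const_mul (ρ ^ 2)).div_const (1 - s))).div_const 2)
    simpa using this
  have hs1' : s - 1 ≠ 0 := by intro h; nlinarith
  have hs2' : s - 2 ≠ 0 := by intro h; nlinarith
  have key := integral_Ioi_of_hasDerivAt_of_nonneg (g := F)
      (g' := fun y => y ^ 3 * (y ^ 2 + ρ ^ 2) ^ (-s))
      (hderiv 0).continuousAt.continuousWithinAt (fun y _ => hderiv y) hnonneg htend
  rw [key]
  have e3 : ρ ^ 2 * ((0:ℝ) ^ 2 + ρ ^ 2) ^ (1 - s) = (ρ ^ 2) ^ (2 - s) := by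
    rw [show ((0:ℝ) ^ 2 + ρ ^ 2) = ρ ^ 2 by ring,
      show (2 - s : ℝ) = 1 + (1 - s) by ring, rpow_add hρ2, rpow_one]
  simp only [hF]
  rw [show ((0:ℝ) ^ 2 + ρ ^ 2) = ρ ^ 2 by ring] at *
  rw [show (2 - s : ℝ) = 1 + (1 - s) by ring, rpow_add hρ2, rpow_one]
  field_simp
  ring_nf
  field_simp [hs1', hs2']
  ring

open Set Filter Topology in
private lemma adhm_reduce (α ρ : ℝ) (hρ : 0 < ρ) (a : Fin 4 → ℝ) :
    ∫ x : Fin 4 → ℝ,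
        (16 * ρ ^ 2 / ((∑ μ : Fin 4, (x μ - a μ) ^ 2) + ρ ^ 2) ^ 2) ^ α *
          (4 * ρ ^ 2 / ((∑ μ : Fin 4, (x μ - a μ) ^ 2) + ρ ^ 2) ^ 2) =
      (2 * π ^ 2) * ∫ y in Ioi (0:ℝ),
        y ^ 3 * ((16 * ρ ^ 2 / ((y ^ 2) + ρ ^ 2) ^ 2) ^ α *
          (4 * ρ ^ 2 / ((y ^ 2) + ρ ^ 2) ^ 2)) := by
  set g : ℝ → ℝ := fun t => (16 * ρ ^ 2 / (t + ρ ^ 2) ^ 2) ^ α * (4 * ρ ^ 2 / (t + ρ ^ 2) ^ 2)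
    with hg
  have step1 : (∫ x : Fin 4 → ℝ, g (∑ μ : Fin 4, (x μ - a μ) ^ 2))
      = ∫ x : Fin 4 → ℝ, g (∑ μ : Fin 4, (x μ) ^ 2) := by
    have := integral_sub_right_eq_self (μ := volume)
      (fun x : Fin 4 → ℝ => g (∑ μ : Fin 4, (x μ) ^ 2)) a
    simpa using this
  have step2 : (∫ x : Fin 4 → ℝ, g (∑ μ : Fin 4, (x μ) ^ 2))
      = ∫ y : EuclideanSpace ℝ (Fin 4), g (‖y‖ ^ 2) := by
    rw [← ((EuclideanSpace.volume_preserving_symm_measurableEquiv_toLp (Fin 4)).integral_comp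
      (MeasurableEquiv.measurableEmbedding _) (fun x : Fin 4 → ℝ => g (∑ μ, (x μ) ^ 2)))]
    congr 1 with y
    congr 1
    rw [EuclideanSpace.norm_eq, Real.sq_sqrt (by positivity)]
    simp [sq_abs]
  have step3 : (∫ y : EuclideanSpace ℝ (Fin 4), g (‖y‖ ^ 2))
      = (2 * π ^ 2) * ∫ y in Ioi (0:ℝ), y ^ 3 * g (y ^ 2) := by
    have h := integral_fun_norm_addHaar (volume : Measure (EuclideanSpace ℝ (Fin 4)))
      (fun r => g (r ^ 2))
    have hdim : Module.finrank ℝ (EuclideanSpace ℝ (Fin 4)) = 4 := by simp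
    have hball : volume.real (Metric.ball (0 : EuclideanSpace ℝ (Fin 4)) 1) = π ^ 2 / 2 := by
      rw [measureReal_def, EuclideanSpace.volume_ball]
      have h3 : Real.Gamma ((Fintype.card (Fin 4) : ℝ) / 2 + 1) = 2 := by
        rw [show ((Fintype.card (Fin 4) : ℝ)/2 + 1) = ((2:ℕ):ℝ) + 1 by simp; norm_num,
          Real.Gamma_nat_eq_factorial]
        norm_num
      rw [h3, Fintype.card_fin, ENNReal.ofReal_one, one_pow, one_mul,
        ENNReal.toReal_ofReal (by positivity),
        show Real.sqrt π ^ 4 = (Real.sqrt π ^ 2) ^ 2 by ring, Real.sq_sqrt Real.pi_pos.le]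
    rw [hdim, hball] at h
    clear_value g
    rw [h]
    simp only [smul_eq_mul, nsmul_eq_mul, Nat.cast_ofNat]
    norm_num
    ring
  rw [step1, step2, step3]

/-- The `a^μ`–`a^μ` component of the universal metric `g^{0,α}` on the `c₂ = 1`
`SU(2)` instanton moduli space built from the ADHM universal matrix:
`∫_{ℝ⁴} Φ(U)^α · Tr(∂_{a_μ}P ∂_{a_μ}P) dx = A(α) ρ^{2−2α}` with
`A(α) = 4^{2α+1} π² (2α−1) Γ(2α−1)/Γ(2α+2)`. -/
theorem adhm_metric_aa_component (α ρ : ℝ) (hα : 1 / 2 < α) (hρ : 0 < ρ)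
    (a : Fin 4 → ℝ) :
    ∫ x : Fin 4 → ℝ,
        (16 * ρ ^ 2 / ((∑ μ : Fin 4, (x μ - a μ) ^ 2) + ρ ^ 2) ^ 2) ^ α *
          (4 * ρ ^ 2 / ((∑ μ : Fin 4, (x μ - a μ) ^ 2) + ρ ^ 2) ^ 2) =
      4 ^ (2 * α + 1) * π ^ 2 * (2 * α - 1) *
        Real.Gamma (2 * α - 1) / Real.Gamma (2 * α + 2) * ρ ^ (2 - 2 * α) := by
  have hρ2 : (0:ℝ) < ρ ^ 2 := by positivity
  rw [adhm_reduce α ρ hρ a]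
  have hpt : ∀ y : ℝ,
      y ^ 3 * ((16 * ρ ^ 2 / ((y ^ 2) + ρ ^ 2) ^ 2) ^ α * (4 * ρ ^ 2 / ((y ^ 2) + ρ ^ 2) ^ 2)) =
        (16 * ρ ^ 2) ^ α * (4 * ρ ^ 2) * (y ^ 3 * (y ^ 2 + ρ ^ 2) ^ (-(2 * α + 2))) := by
    intro y
    have hu : (0:ℝ) < y ^ 2 + ρ ^ 2 := by positivity
    rw [div_rpow (by positivity) (by positivity)]
    rw [← Real.rpow_natCast (y ^ 2 + ρ ^ 2) 2, ← Real.rpow_mul hu.le]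
    rw [Real.rpow_neg hu.le, show (2 * α + 2 : ℝ) = ((2:ℕ):ℝ) * α + ((2:ℕ):ℝ) by push_cast; ring,
      Real.rpow_add hu, Real.rpow_natCast]
    have h1 : (y ^ 2 + ρ ^ 2) ^ (((2:ℕ):ℝ) * α) ≠ 0 := (Real.rpow_pos_of_pos hu _).ne'
    field_simp
  simp only [hpt]
  rw [integral_const_mul, adhm_radial_int ρ hρ (by linarith : (3:ℝ) < 2 * α + 2)]
  -- Gamma recursion
  have hG : Real.Gamma (2 * α + 2) = (2 * α + 1) * ((2 * α) * ((2 * α - 1) *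
      Real.Gamma (2 * α - 1))) := by
    rw [show (2 * α + 2 : ℝ) = (2 * α + 1) + 1 by ring, Real.Gamma_add_one (by linarith),
      show (2 * α + 1 : ℝ) = (2 * α) + 1 by ring, Real.Gamma_add_one (by linarith),
      show (2 * α : ℝ) = (2 * α - 1) + 1 by ring, Real.Gamma_add_one (by linarith)]
    ring
  have hGpos : 0 < Real.Gamma (2 * α - 1) := Real.Gamma_pos_of_pos (by linarith)
  -- rpow algebra
  have e1 : (16 * ρ ^ 2 : ℝ) ^ α = (4:ℝ) ^ (2 * α) * (ρ ^ 2) ^ α := by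
    rw [Real.mul_rpow (by norm_num) hρ2.le,
      show (16:ℝ) = (4:ℝ) ^ ((2:ℕ):ℝ) by rw [Real.rpow_natCast]; norm_num,
      ← Real.rpow_mul (by norm_num : (0:ℝ) ≤ 4)]
    push_cast
    ring_nf
  have e2 : (4:ℝ) ^ (2 * α + 1) = (4:ℝ) ^ (2 * α) * 4 := by
    rw [Real.rpow_add (by norm_num : (0:ℝ) < 4), Real.rpow_one]
  have hP : ((ρ ^ 2 : ℝ) ^ α) ≠ 0 := (Real.rpow_pos_of_pos hρ2 _).ne'
  have e5 : (ρ ^ 2 : ℝ) ^ (2 - (2 * α + 2)) = ρ ^ (2 - 2 * α) / ((ρ ^ 2) ^ α * ρ ^ 2) := by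
    rw [eq_div_iff (by positivity), ← mul_assoc, ← Real.rpow_add hρ2,
      show (2 - (2 * α + 2) + α : ℝ) = -α by ring, ← Real.rpow_natCast ρ 2,
      ← Real.rpow_mul hρ.le, ← Real.rpow_add hρ]
    congr 1
    push_cast
    ring
  rw [e1, e2, hG, e5]
  have h1 : (2 * α + 1 : ℝ) ≠ 0 := by linarith
  have h2 : (2 * α : ℝ) ≠ 0 := by linarith
  have h3 : (2 * α - 1 : ℝ) ≠ 0 := by linarith
  have h4 : (2 * α + 2 - 1 : ℝ) ≠ 0 := by linarith
  have h5 : (2 * α + 2 - 2 : ℝ) ≠ 0 := by linarith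
  field_simp
  ring_nf
  have h6 : α + α ^ 2 * 2 ≠ 0 := by nlinarith
  calc _ = (α + α ^ 2 * 2) * (α + α ^ 2 * 2)⁻¹ := by ring
    _ = 1 := mul_inv_cancel₀ h6
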